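/- Let F be an APN function on F_2^m, u ∈ F_2^m nonzero, and define the counting function n_u : F_2^m → F_2 by n_u(v) = 1 if F(x+u)+F(x)=v has exactly 2 solutions and n_u(v) = 0 if it has no solutions. Then for every nonzero b ∈ F_2^m, the Walsh coefficient of n_u at b equals minus the autocorrelation of the component F_b at u: W_{n_u}(b) = −(F_b ⋆ F_b)(u); moreover W_{n_u}(0) = 0. -/
import Mathlib


open Finset

/-- Dot product on `F_2^m`. -/
def dot {m : ℕ} (a x : Fin m → ZMod 2) : ZMod 2 := ∑ i, a i * x i

/-- Walsh coefficient of a Boolean function. -/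
def walsh {m : ℕ} (f : (Fin m → ZMod 2) → ZMod 2) (a : Fin m → ZMod 2) : ℤ :=
  ∑ x : Fin m → ZMod 2, (-1 : ℤ) ^ (f x + dot a x).val

/-- Autocorrelation of a Boolean function at `t`. -/
def autocorr {m : ℕ} (f : (Fin m → ZMod 2) → ZMod 2) (t : Fin m → ZMod 2) : ℤ :=
  ∑ x : Fin m → ZMod 2, (-1 : ℤ) ^ (f x + f (x + t)).val

/-- `F` is almost perfect nonlinear: every derivative equation has at most 2 solutions. -/
def IsAPN {m : ℕ} (F : (Fin m → ZMod 2) → (Fin m → ZMod 2)) : Prop :=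
  ∀ u : Fin m → ZMod 2, u ≠ 0 → ∀ v : Fin m → ZMod 2,
    (Finset.univ.filter (fun x : Fin m → ZMod 2 => F (x + u) + F x = v)).card ≤ 2

/-- The counting function `n_u` of an APN function `F` in direction `u ≠ 0`. -/
def countFun {m : ℕ} (F : (Fin m → ZMod 2) → (Fin m → ZMod 2)) (u : Fin m → ZMod 2)
    (v : Fin m → ZMod 2) : ZMod 2 :=
  if (Finset.univ.filter (fun x : Fin m → ZMod 2 => F (x + u) + F x = v)).card = 2 then 1 else 0

lemma dot_add' {m : ℕ} (b x y : Fin m → ZMod 2) : dot b (x + y) = dot b x + dot b y := by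
  unfold dot
  rw [← Finset.sum_add_distrib]
  exact Finset.sum_congr rfl (fun i _ => by simp [mul_add])

lemma add_self' {m : ℕ} (x : Fin m → ZMod 2) : x + x = 0 := by
  funext i
  have h : ∀ a : ZMod 2, a + a = 0 := by decide
  exact h (x i)

lemma card_fiber {m : ℕ} (F : (Fin m → ZMod 2) → (Fin m → ZMod 2)) (hF : IsAPN F)
    (u : Fin m → ZMod 2) (hu : u ≠ 0) (v : Fin m → ZMod 2) :
    (Finset.univ.filter (fun x : Fin m → ZMod 2 => F (x + u) + F x = v)).card = 0 ∨
    (Finset.univ.filter (fun x : Fin m → ZMod 2 => F (x + u) + F x = v)).card = 2 := by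
  set S := Finset.univ.filter (fun x : Fin m → ZMod 2 => F (x + u) + F x = v) with hS
  rcases S.eq_empty_or_nonempty with h | ⟨x, hx⟩
  · left; simp [h]
  · right
    have hxv : F (x + u) + F x = v := by
      have := Finset.mem_filter.mp hx; exact this.2
    have hx2 : x + u ∈ S := by
      rw [hS, Finset.mem_filter]
      refine ⟨Finset.mem_univ _, ?_⟩
      rw [add_assoc, add_self', add_zero, add_comm]
      exact hxv
    have hne : x ≠ x + u := by
      intro h
      apply hu
      calc u = (x + x) + u := by rw [add_self', zero_add]
        _ = x + (x + u) := by rw [add_assoc]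
        _ = x + x := by rw [← h]
        _ = 0 := add_self' x
    have h2 : 1 < S.card := Finset.one_lt_card.mpr ⟨x, hx, x + u, hx2, hne⟩
    have hle : S.card ≤ 2 := hF u hu v
    omega

lemma sum_chi_dot {m : ℕ} (b : Fin m → ZMod 2) (hb : b ≠ 0) :
    ∑ v : Fin m → ZMod 2, (-1 : ℤ) ^ (dot b v).val = 0 := by
  obtain ⟨i, hi⟩ := Function.ne_iff.mp hb
  have hbi : b i = 1 := by
    have h1 : ∀ c : ZMod 2, c ≠ 0 → c = 1 := by decide
    exact h1 _ (by simpa using hi)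
  set δ : Fin m → ZMod 2 := Pi.single i 1 with hδ
  have hdotδ : dot b δ = 1 := by
    unfold dot
    rw [Finset.sum_eq_single i]
    · simp [hδ, hbi]
    · intro j _ hj; simp [hδ, Pi.single_eq_of_ne hj]
    · intro h; exact absurd (Finset.mem_univ i) h
  set S := ∑ v : Fin m → ZMod 2, (-1 : ℤ) ^ (dot b v).val with hSdef
  have key : S = -S := by
    calc S = ∑ v : Fin m → ZMod 2, (-1 : ℤ) ^ (dot b (v + δ)).val := by
            rw [hSdef]
            exact (Fintype.sum_equiv (Equiv.addRight δ) _ _ (fun v => rfl)).symm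
      _ = ∑ v : Fin m → ZMod 2, -((-1 : ℤ) ^ (dot b v).val) := by
            apply Finset.sum_congr rfl
            intro v _
            rw [dot_add', hdotδ]
            have hflip : ∀ c : ZMod 2, ((-1 : ℤ)) ^ ((c + 1).val) = -((-1 : ℤ) ^ c.val) := by
              decide
            exact hflip _
      _ = -S := by rw [hSdef, Finset.sum_neg_distrib]
  omega

lemma walsh_eq {m : ℕ} (F : (Fin m → ZMod 2) → (Fin m → ZMod 2)) (hF : IsAPN F)
    (u : Fin m → ZMod 2) (hu : u ≠ 0) (b : Fin m → ZMod 2) :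
    walsh (countFun F u) b = (∑ v : Fin m → ZMod 2, (-1 : ℤ) ^ (dot b v).val)
      - autocorr (fun x => dot b (F x)) u := by
  have step1 : walsh (countFun F u) b =
      (∑ v : Fin m → ZMod 2, (-1 : ℤ) ^ (dot b v).val)
      - ∑ v : Fin m → ZMod 2,
          ((Finset.univ.filter (fun x : Fin m → ZMod 2 => F (x + u) + F x = v)).card : ℤ)
            * (-1 : ℤ) ^ (dot b v).val := by
    unfold walsh
    rw [← Finset.sum_sub_distrib]
    apply Finset.sum_congr rfl
    intro v _
    rcases card_fiber F hF u hu v with h | h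
    · rw [h]
      unfold countFun
      rw [if_neg (by omega), zero_add]
      push_cast
      ring
    · rw [h]
      unfold countFun
      rw [if_pos h]
      have hflip : ∀ c : ZMod 2, ((-1 : ℤ)) ^ (((1 : ZMod 2) + c).val) = -((-1 : ℤ) ^ c.val) := by
        decide
      rw [hflip]
      push_cast
      ring
  have step2 : ∑ v : Fin m → ZMod 2,
      ((Finset.univ.filter (fun x : Fin m → ZMod 2 => F (x + u) + F x = v)).card : ℤ)
        * (-1 : ℤ) ^ (dot b v).val = autocorr (fun x => dot b (F x)) u := by
    have h1 : ∀ v : Fin m → ZMod 2,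
        ((Finset.univ.filter (fun x : Fin m → ZMod 2 => F (x + u) + F x = v)).card : ℤ)
          * (-1 : ℤ) ^ (dot b v).val
        = ∑ x ∈ Finset.univ.filter (fun x : Fin m → ZMod 2 => F (x + u) + F x = v),
            (-1 : ℤ) ^ (dot b (F x) + dot b (F (x + u))).val := by
      intro v
      have hcg : ∀ x ∈ Finset.univ.filter (fun x : Fin m → ZMod 2 => F (x + u) + F x = v),
          (-1 : ℤ) ^ (dot b (F x) + dot b (F (x + u))).val = (-1 : ℤ) ^ (dot b v).val := by
        intro x hx
        have hxv : F (x + u) + F x = v := (Finset.mem_filter.mp hx).2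
        rw [← hxv, dot_add', add_comm]
      rw [Finset.sum_congr rfl hcg, Finset.sum_const, nsmul_eq_mul]
    calc ∑ v : Fin m → ZMod 2,
          ((Finset.univ.filter (fun x : Fin m → ZMod 2 => F (x + u) + F x = v)).card : ℤ)
            * (-1 : ℤ) ^ (dot b v).val
        = ∑ v : Fin m → ZMod 2,
            ∑ x ∈ Finset.univ.filter (fun x : Fin m → ZMod 2 => F (x + u) + F x = v),
              (-1 : ℤ) ^ (dot b (F x) + dot b (F (x + u))).val :=
          Finset.sum_congr rfl (fun v _ => h1 v)
      _ = ∑ x : Fin m → ZMod 2, (-1 : ℤ) ^ (dot b (F x) + dot b (F (x + u))).val :=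
          Finset.sum_fiberwise _ _ _
      _ = autocorr (fun x => dot b (F x)) u := rfl
  rw [step1, step2]

/-- Walsh coefficients of the counting function of an APN function. -/
theorem walsh_countFun {m : ℕ} (F : (Fin m → ZMod 2) → (Fin m → ZMod 2)) (hF : IsAPN F)
    (u : Fin m → ZMod 2) (hu : u ≠ 0) :
    (∀ b : Fin m → ZMod 2, b ≠ 0 →
        walsh (countFun F u) b = - autocorr (fun x => dot b (F x)) u) ∧
      walsh (countFun F u) 0 = 0 := by
  constructor
  · intro b hb
    rw [walsh_eq F hF u hu b, sum_chi_dot b hb]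
    ring
  · rw [walsh_eq F hF u hu 0]
    have h1 : ∀ v : Fin m → ZMod 2, dot (0 : Fin m → ZMod 2) v = 0 := by
      intro v; unfold dot; simp
    simp [autocorr, h1]
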